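/- On ℓ_∞, define for each finite strictly increasing sequence j = (j_0, …, j_p) of natural numbers Q(x, j) = |x(j_0)| + Σ_{k=1}^{p} 2^{−k} x(j_k)^+, and ‖x‖ = sup_j Q(x, j), q(x) = (Σ_{k≥1} 2^{−k} x(k)²)^{1/2}, |||x||| = (‖x‖² + q(x)²)^{1/2}. Then for all x ∈ ℓ_∞: ‖x‖_∞ ≤ ‖x‖ ≤ |||x||| ≤ (‖x‖² + ‖x‖_∞²)^{1/2} ≤ √2 ‖x‖ ≤ 3 ‖x‖_∞. -/

import Mathlib

open Filter Topology BoundedContinuousFunction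

/-- `Q(x,j)` for a strictly increasing sequence `j` truncated at index `p`. -/
noncomputable def Qfun (x : ℕ →ᵇ ℝ) (j : ℕ → ℕ) (p : ℕ) : ℝ :=
  |x (j 0)| + ∑ k ∈ Finset.Icc 1 p, (1/2 : ℝ) ^ k * max (x (j k)) 0

/-- `‖x‖ = sup_j Q(x,j)`. -/
noncomputable def NrmQ (x : ℕ →ᵇ ℝ) : ℝ :=
  sSup {r : ℝ | ∃ (j : ℕ → ℕ) (p : ℕ), StrictMono j ∧ r = Qfun x j p}

/-- `q(x) = (Σ_{k≥1} 2^{-k} x(k)²)^{1/2}`. -/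
noncomputable def qQ (x : ℕ →ᵇ ℝ) : ℝ :=
  Real.sqrt (∑' k : ℕ, (1/2 : ℝ) ^ (k + 1) * (x k) ^ 2)

/-- `|||x||| = (‖x‖² + q(x)²)^{1/2}`. -/
noncomputable def TQ (x : ℕ →ᵇ ℝ) : ℝ :=
  Real.sqrt (NrmQ x ^ 2 + qQ x ^ 2)

lemma geomIcc (p : ℕ) : ∑ k ∈ Finset.Icc 1 p, (1/2 : ℝ) ^ k = 1 - (1/2) ^ p := by
  induction p with
  | zero => simp
  | succ n ih =>
    rw [Finset.sum_Icc_succ_top (by omega), ih]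
    ring

lemma abs_apply_le (x : ℕ →ᵇ ℝ) (n : ℕ) : |x n| ≤ ‖x‖ := by
  have := x.norm_coe_le_norm n
  rwa [Real.norm_eq_abs] at this

lemma Qfun_le (x : ℕ →ᵇ ℝ) (j : ℕ → ℕ) (p : ℕ) : Qfun x j p ≤ 2 * ‖x‖ := by
  have h1 : |x (j 0)| ≤ ‖x‖ := abs_apply_le x (j 0)
  have h2 : ∑ k ∈ Finset.Icc 1 p, (1/2 : ℝ) ^ k * max (x (j k)) 0
      ≤ ∑ k ∈ Finset.Icc 1 p, (1/2 : ℝ) ^ k * ‖x‖ := by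
    apply Finset.sum_le_sum
    intro k _
    have hm : max (x (j k)) 0 ≤ ‖x‖ :=
      max_le (le_trans (le_abs_self _) (abs_apply_le x (j k))) (norm_nonneg x)
    exact mul_le_mul_of_nonneg_left hm (by positivity)
  rw [← Finset.sum_mul, geomIcc] at h2
  have hp : (0:ℝ) ≤ (1/2) ^ p := by positivity
  have hx : (0:ℝ) ≤ ‖x‖ := norm_nonneg x
  unfold Qfun
  nlinarith

lemma NrmQ_bddAbove (x : ℕ →ᵇ ℝ) :
    BddAbove {r : ℝ | ∃ (j : ℕ → ℕ) (p : ℕ), StrictMono j ∧ r = Qfun x j p} := by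
  refine ⟨2 * ‖x‖, ?_⟩
  rintro r ⟨j, p, hj, rfl⟩
  exact Qfun_le x j p

lemma abs_le_NrmQ (x : ℕ →ᵇ ℝ) (n : ℕ) : |x n| ≤ NrmQ x := by
  have hmem : |x n| ∈ {r : ℝ | ∃ (j : ℕ → ℕ) (p : ℕ), StrictMono j ∧ r = Qfun x j p} := by
    refine ⟨fun k => n + k, 0, fun a b h => Nat.add_lt_add_left h _, ?_⟩
    simp [Qfun]
  exact le_csSup (NrmQ_bddAbove x) hmem

lemma NrmQ_nonneg (x : ℕ →ᵇ ℝ) : 0 ≤ NrmQ x :=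
  le_trans (abs_nonneg _) (abs_le_NrmQ x 0)

lemma NrmQ_le (x : ℕ →ᵇ ℝ) : NrmQ x ≤ 2 * ‖x‖ := by
  apply csSup_le
  · exact ⟨|x 0|, fun k => 0 + k, 0, fun a b h => Nat.add_lt_add_left h _, by simp [Qfun]⟩
  · rintro r ⟨j, p, hj, rfl⟩
    exact Qfun_le x j p

lemma sq_apply_le (x : ℕ →ᵇ ℝ) (k : ℕ) : (x k) ^ 2 ≤ ‖x‖ ^ 2 := by
  have h := abs_apply_le x k
  nlinarith [sq_abs (x k), abs_nonneg (x k)]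

lemma summable_geom_half : Summable (fun k : ℕ => (1/2 : ℝ) ^ k) :=
  summable_geometric_of_lt_one (r := (1/2 : ℝ)) (by norm_num) (by norm_num)

lemma summable_aux (x : ℕ →ᵇ ℝ) : Summable (fun k : ℕ => (1/2 : ℝ) ^ (k + 1) * (x k) ^ 2) := by
  refine (summable_geom_half.mul_right (‖x‖ ^ 2)).of_nonneg_of_le
    (fun k => by positivity) (fun k => ?_)
  have h1 : (x k) ^ 2 ≤ ‖x‖ ^ 2 := sq_apply_le x k
  have h2 : (1/2 : ℝ) ^ (k+1) ≤ (1/2:ℝ) ^ k :=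
    pow_le_pow_of_le_one (by norm_num) (by norm_num) (by omega)
  have hp : (0:ℝ) ≤ (1/2:ℝ)^(k+1) := by positivity
  have hq : (0:ℝ) ≤ (1/2:ℝ)^k := by positivity
  nlinarith [sq_nonneg (x k)]

lemma tsum_le_aux (x : ℕ →ᵇ ℝ) : (∑' k : ℕ, (1/2 : ℝ) ^ (k + 1) * (x k) ^ 2) ≤ ‖x‖ ^ 2 := by
  have hs : Summable (fun k : ℕ => (1/2 : ℝ) ^ (k + 1) * ‖x‖ ^ 2) := by
    refine (summable_geom_half.mul_right (‖x‖ ^ 2)).of_nonneg_of_le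
      (fun k => by positivity) (fun k => ?_)
    have h2 : (1/2 : ℝ) ^ (k+1) ≤ (1/2:ℝ) ^ k :=
      pow_le_pow_of_le_one (by norm_num) (by norm_num) (by omega)
    nlinarith [sq_nonneg ‖x‖]
  have h1 : (∑' k : ℕ, (1/2 : ℝ) ^ (k + 1) * (x k) ^ 2)
      ≤ ∑' k : ℕ, (1/2 : ℝ) ^ (k + 1) * ‖x‖ ^ 2 := by
    apply Summable.tsum_le_tsum _ (summable_aux x) hs
    intro k
    have h1 : (x k) ^ 2 ≤ ‖x‖ ^ 2 := sq_apply_le x k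
    have hp : (0:ℝ) ≤ (1/2:ℝ)^(k+1) := by positivity
    nlinarith
  have h2 : (∑' k : ℕ, (1/2 : ℝ) ^ (k + 1) * ‖x‖ ^ 2) = ‖x‖ ^ 2 := by
    rw [tsum_mul_right]
    have : (∑' k : ℕ, (1/2 : ℝ) ^ (k + 1)) = 1 := by
      have h3 : (∑' k : ℕ, (1/2 : ℝ) ^ (k + 1)) = (1/2) * ∑' k : ℕ, (1/2 : ℝ) ^ k := by
        rw [← tsum_mul_left]
        congr 1
        funext k
        rw [pow_succ]; ring
      rw [h3, tsum_geometric_of_lt_one (r := (1/2:ℝ)) (by norm_num) (by norm_num)]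
      norm_num
    rw [this, one_mul]
  linarith

/-- The chain of inequalities (4.1):
`‖x‖_∞ ≤ ‖x‖ ≤ |||x||| ≤ (‖x‖² + ‖x‖_∞²)^{1/2} ≤ √2 ‖x‖ ≤ 3 ‖x‖_∞`. -/
theorem stmt16 (x : ℕ →ᵇ ℝ) :
    ‖x‖ ≤ NrmQ x ∧ NrmQ x ≤ TQ x ∧
    TQ x ≤ Real.sqrt (NrmQ x ^ 2 + ‖x‖ ^ 2) ∧
    Real.sqrt (NrmQ x ^ 2 + ‖x‖ ^ 2) ≤ Real.sqrt 2 * NrmQ x ∧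
    Real.sqrt 2 * NrmQ x ≤ 3 * ‖x‖ := by
  have hN0 : 0 ≤ NrmQ x := NrmQ_nonneg x
  have hx0 : (0:ℝ) ≤ ‖x‖ := norm_nonneg x
  have hxN : ‖x‖ ≤ NrmQ x := by
    apply (BoundedContinuousFunction.norm_le hN0).2
    intro n
    rw [Real.norm_eq_abs]
    exact abs_le_NrmQ x n
  have hq2 : qQ x ^ 2 ≤ ‖x‖ ^ 2 := by
    rw [qQ, Real.sq_sqrt (tsum_nonneg fun k => by positivity)]
    exact tsum_le_aux x
  have hq0 : 0 ≤ qQ x ^ 2 := sq_nonneg _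
  refine ⟨hxN, ?_, ?_, ?_, ?_⟩
  · rw [TQ]
    calc NrmQ x = Real.sqrt (NrmQ x ^ 2) := (Real.sqrt_sq hN0).symm
    _ ≤ _ := Real.sqrt_le_sqrt (by linarith)
  · rw [TQ]
    exact Real.sqrt_le_sqrt (by linarith)
  · have : Real.sqrt 2 * NrmQ x = Real.sqrt (2 * NrmQ x ^ 2) := by
      rw [Real.sqrt_mul (by norm_num), Real.sqrt_sq hN0]
    rw [this]
    apply Real.sqrt_le_sqrt
    nlinarith
  · have hs : Real.sqrt 2 ≤ 3/2 := by
      rw [show (3/2:ℝ) = Real.sqrt ((3/2)^2) from (Real.sqrt_sq (by norm_num)).symm]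
      exact Real.sqrt_le_sqrt (by norm_num)
    have hs0 : 0 ≤ Real.sqrt 2 := Real.sqrt_nonneg 2
    have h2 : NrmQ x ≤ 2 * ‖x‖ := NrmQ_le x
    nlinarith
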